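/- Let α, β ∈ S_n, let α = α_1 ⋯ α_d be the disjoint cycle decomposition of α, and let a_i denote the length of the cycle α_i. Let X = { x ∈ ℤ : l_∞(β, α^x) ≤ 1 }. Then for every i ∈ {1,…,d} there exist numbers y_1, y_2 with 0 ≤ y_1, y_2 < a_i such that every x ∈ X satisfies x ≡ y_1 (mod a_i) or x ≡ y_2 (mod a_i). -/

import Mathlib

open Equiv Equiv.Perm

private lemma zpow_agree (n : ℕ) (α c : Equiv.Perm (Fin n))
    (hc : c ∈ α.cycleFactorsFinset) :
    ∀ (x : ℤ) (j : Fin n), j ∈ c.support → (α ^ x) j = (c ^ x) j := by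
  obtain ⟨hcyc, hagree⟩ := Equiv.Perm.mem_cycleFactorsFinset_iff.mp hc
  have hstep : ∀ j : Fin n, j ∈ c.support → α j = c j := fun j hj => (hagree j hj).symm
  have hmemc : ∀ j : Fin n, j ∈ c.support → c j ∈ c.support := by
    intro j hj; exact Equiv.Perm.apply_mem_support.mpr hj
  have hmeminv : ∀ j : Fin n, j ∈ c.support → c⁻¹ j ∈ c.support := by
    intro j hj
    simpa using (Equiv.Perm.zpow_apply_mem_support (f := c) (n := (-1 : ℤ)) (x := j)).mpr hj
  have hstepinv : ∀ j : Fin n, j ∈ c.support → α⁻¹ j = c⁻¹ j := by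
    intro j hj
    have h1 : c⁻¹ j ∈ c.support := hmeminv j hj
    have h2 : α (c⁻¹ j) = c (c⁻¹ j) := hstep _ h1
    rw [show c (c⁻¹ j) = j from c.apply_symm_apply j] at h2
    rw [Equiv.Perm.inv_eq_iff_eq]
    exact h2.symm
  intro x
  induction x using Int.induction_on with
  | zero => intro j hj; simp
  | succ k ih =>
    intro j hj
    have h1 : (α ^ ((k : ℤ) + 1)) j = (α ^ (k : ℤ)) (α j) := by
      rw [zpow_add_one, Equiv.Perm.mul_apply]
    have h2 : (c ^ ((k : ℤ) + 1)) j = (c ^ (k : ℤ)) (c j) := by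
      rw [zpow_add_one, Equiv.Perm.mul_apply]
    rw [h1, h2, hstep j hj, ih (c j) (hmemc j hj)]
  | pred k ih =>
    intro j hj
    have h1 : (α ^ (-(k : ℤ) - 1)) j = (α ^ (-(k : ℤ))) (α⁻¹ j) := by
      rw [zpow_sub_one, Equiv.Perm.mul_apply]
    have h2 : (c ^ (-(k : ℤ) - 1)) j = (c ^ (-(k : ℤ))) (c⁻¹ j) := by
      rw [zpow_sub_one, Equiv.Perm.mul_apply]
    rw [h1, h2, hstepinv j hj, ih (c⁻¹ j) (hmeminv j hj)]

private lemma fix_dvd (n : ℕ) (c : Equiv.Perm (Fin n)) (hcyc : c.IsCycle)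
    {j : Fin n} (hj : j ∈ c.support) {k : ℤ} (hk : (c ^ k) j = j) :
    ((c.support.card : ℤ)) ∣ k := by
  have horder : orderOf c = c.support.card := hcyc.orderOf
  rw [← horder, orderOf_dvd_iff_zpow_eq_one]
  have hfix : c j ≠ j := Equiv.Perm.mem_support.mp hj
  have hpos : 0 < (orderOf c : ℤ) := by
    have : 0 < orderOf c := horder ▸ Finset.card_pos.mpr ⟨j, hj⟩
    exact_mod_cast this
  set e : ℤ := k % (orderOf c : ℤ) with he
  have hmod : k ≡ e [ZMOD (orderOf c : ℤ)] := (Int.emod_emod_of_dvd k dvd_rfl).symm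
  have hee : c ^ k = c ^ e := zpow_eq_zpow_iff_modEq.mpr hmod
  have henn : 0 ≤ e := Int.emod_nonneg k (ne_of_gt hpos)
  have helt : e < (orderOf c : ℤ) := Int.emod_lt_of_pos k hpos
  have hee2 : c ^ e = c ^ (e.toNat) := by
    rw [← zpow_natCast, Int.toNat_of_nonneg henn]
  have hfixn : (c ^ (e.toNat)) j = j := by rw [← hee2, ← hee]; exact hk
  have h1 : c ^ (e.toNat) = 1 := (hcyc.pow_eq_one_iff' hfix).mpr hfixn
  have h2 : orderOf c ∣ e.toNat := orderOf_dvd_of_pow_eq_one h1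
  have h3 : e.toNat < orderOf c := by omega
  have h4 : e.toNat = 0 := Nat.eq_zero_of_dvd_of_lt h2 h3
  have h5 : e = 0 := by omega
  rw [hee, h5, zpow_zero]

theorem stmt5 (n : ℕ) (α β : Equiv.Perm (Fin n))
    (c : Equiv.Perm (Fin n)) (hc : c ∈ α.cycleFactorsFinset) :
    ∃ y₁ y₂ : ℕ, y₁ < c.support.card ∧ y₂ < c.support.card ∧
      ∀ x : ℤ, (∀ i : Fin n, |((β i : ℕ) : ℤ) - (((α ^ x) i : ℕ) : ℤ)| ≤ 1) →
        ((x : ℤ) ≡ (y₁ : ℤ) [ZMOD (c.support.card : ℤ)] ∨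
         (x : ℤ) ≡ (y₂ : ℤ) [ZMOD (c.support.card : ℤ)]) := by
  classical
  obtain ⟨hcyc, -⟩ := Equiv.Perm.mem_cycleFactorsFinset_iff.mp hc
  have ha2 : 2 ≤ c.support.card := hcyc.two_le_card_support
  have hapos : (0 : ℤ) < (c.support.card : ℤ) := by exact_mod_cast (by omega : 0 < c.support.card)
  have hne : c.support.Nonempty := Finset.card_pos.mp (by omega)
  set m := c.support.min' hne with hm
  have hmmem : m ∈ c.support := Finset.min'_mem _ _
  -- congruence from equality at a support point
  have congr_of_eq : ∀ (j : Fin n), j ∈ c.support → ∀ x x' : ℤ,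
      (c ^ x) j = (c ^ x') j → x ≡ x' [ZMOD (c.support.card : ℤ)] := by
    intro j hj x x' hxx
    have e1 : c ^ (x - x') = c ^ (-x') * c ^ x := by
      rw [← zpow_add]; ring_nf
    have hfix : (c ^ (x - x')) j = j := by
      rw [e1, Equiv.Perm.mul_apply, hxx, ← Equiv.Perm.mul_apply, ← zpow_add]
      simp
    have hdvd := fix_dvd n c hcyc hj hfix
    have : (c.support.card : ℤ) ∣ x' - x := by
      have := dvd_neg.mpr hdvd; rwa [neg_sub] at this
    exact Int.modEq_iff_dvd.mpr this
  -- value of β at the c^(-x)-preimage of m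
  have hval : ∀ x : ℤ, (∀ i : Fin n, |((β i : ℕ) : ℤ) - (((α ^ x) i : ℕ) : ℤ)| ≤ 1) →
      |((β ((c ^ (-x)) m) : ℕ) : ℤ) - ((m : ℕ) : ℤ)| ≤ 1 := by
    intro x hx
    have hjm : (c ^ (-x)) m ∈ c.support := Equiv.Perm.zpow_apply_mem_support.mpr hmmem
    have h1 : (α ^ x) ((c ^ (-x)) m) = (c ^ x) ((c ^ (-x)) m) := zpow_agree n α c hc x _ hjm
    have h2 : (c ^ x) ((c ^ (-x)) m) = m := by
      rw [← Equiv.Perm.mul_apply, ← zpow_add]; simp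
    have h3 := hx ((c ^ (-x)) m)
    rwa [h1, h2] at h3
  -- key: a point mapping to m - 1 pins down the residue
  have keyC : ∀ (j : Fin n), j ∈ c.support → ((β j : ℕ) : ℤ) = ((m : ℕ) : ℤ) - 1 →
      ∀ x : ℤ, (∀ i : Fin n, |((β i : ℕ) : ℤ) - (((α ^ x) i : ℕ) : ℤ)| ≤ 1) →
      (c ^ x) j = m := by
    intro j hj hbj x hx
    have h1 : (α ^ x) j = (c ^ x) j := zpow_agree n α c hc x j hj
    have h2 : (c ^ x) j ∈ c.support := Equiv.Perm.zpow_apply_mem_support.mpr hj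
    have h3 : m ≤ (c ^ x) j := Finset.min'_le _ _ h2
    have h3' : (m : ℕ) ≤ ((c ^ x) j : ℕ) := h3
    have h4 := hx j
    rw [h1, hbj, abs_le] at h4
    have : ((c ^ x) j : ℕ) = (m : ℕ) := by omega
    exact Fin.ext this
  -- the three-residue contradiction
  have key3 : ∀ x₁ x₂ x₃ : ℤ,
      (∀ i : Fin n, |((β i : ℕ) : ℤ) - (((α ^ x₁) i : ℕ) : ℤ)| ≤ 1) →
      (∀ i : Fin n, |((β i : ℕ) : ℤ) - (((α ^ x₂) i : ℕ) : ℤ)| ≤ 1) →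
      (∀ i : Fin n, |((β i : ℕ) : ℤ) - (((α ^ x₃) i : ℕ) : ℤ)| ≤ 1) →
      ¬ x₁ ≡ x₂ [ZMOD (c.support.card : ℤ)] →
      ¬ x₁ ≡ x₃ [ZMOD (c.support.card : ℤ)] →
      ¬ x₂ ≡ x₃ [ZMOD (c.support.card : ℤ)] → False := by
    intro x₁ x₂ x₃ h1 h2 h3 h12 h13 h23
    set j₁ := (c ^ (-x₁)) m with hj₁
    set j₂ := (c ^ (-x₂)) m with hj₂
    set j₃ := (c ^ (-x₃)) m with hj₃
    have hm₁ : j₁ ∈ c.support := Equiv.Perm.zpow_apply_mem_support.mpr hmmem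
    have hm₂ : j₂ ∈ c.support := Equiv.Perm.zpow_apply_mem_support.mpr hmmem
    have hm₃ : j₃ ∈ c.support := Equiv.Perm.zpow_apply_mem_support.mpr hmmem
    have hdist : ∀ x x' : ℤ, ¬ x ≡ x' [ZMOD (c.support.card : ℤ)] →
        (c ^ (-x)) m ≠ (c ^ (-x')) m := by
      intro x x' hxx heq
      have := congr_of_eq m hmmem (-x) (-x') heq
      have := this.neg
      simp only [neg_neg] at this
      exact hxx this
    have d12 : j₁ ≠ j₂ := hdist x₁ x₂ h12
    have d13 : j₁ ≠ j₃ := hdist x₁ x₃ h13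
    have d23 : j₂ ≠ j₃ := hdist x₂ x₃ h23
    have b12 : (β j₁ : ℕ) ≠ (β j₂ : ℕ) := fun h => d12 (β.injective (Fin.ext h))
    have b13 : (β j₁ : ℕ) ≠ (β j₃ : ℕ) := fun h => d13 (β.injective (Fin.ext h))
    have b23 : (β j₂ : ℕ) ≠ (β j₃ : ℕ) := fun h => d23 (β.injective (Fin.ext h))
    have v1 : |((β j₁ : ℕ) : ℤ) - ((m : ℕ) : ℤ)| ≤ 1 := hval x₁ h1
    have v2 : |((β j₂ : ℕ) : ℤ) - ((m : ℕ) : ℤ)| ≤ 1 := hval x₂ h2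
    have v3 : |((β j₃ : ℕ) : ℤ) - ((m : ℕ) : ℤ)| ≤ 1 := hval x₃ h3
    have hcase : ((β j₁ : ℕ) : ℤ) = ((m : ℕ) : ℤ) - 1 ∨
        ((β j₂ : ℕ) : ℤ) = ((m : ℕ) : ℤ) - 1 ∨
        ((β j₃ : ℕ) : ℤ) = ((m : ℕ) : ℤ) - 1 := by
      rw [abs_le] at v1 v2 v3
      omega
    rcases hcase with hj | hj | hj
    · exact h12 (congr_of_eq j₁ hm₁ x₁ x₂ ((keyC j₁ hm₁ hj x₁ h1).trans (keyC j₁ hm₁ hj x₂ h2).symm))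
    · exact h12 (congr_of_eq j₂ hm₂ x₁ x₂ ((keyC j₂ hm₂ hj x₁ h1).trans (keyC j₂ hm₂ hj x₂ h2).symm))
    · exact h12 (congr_of_eq j₃ hm₃ x₁ x₂ ((keyC j₃ hm₃ hj x₁ h1).trans (keyC j₃ hm₃ hj x₂ h2).symm))
  -- now assemble
  have hres : ∀ z : ℤ, ((z % (c.support.card : ℤ)).toNat : ℤ) = z % (c.support.card : ℤ) :=
    fun z => Int.toNat_of_nonneg (Int.emod_nonneg z (ne_of_gt hapos))
  have hreslt : ∀ z : ℤ, (z % (c.support.card : ℤ)).toNat < c.support.card := by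
    intro z
    have := Int.emod_lt_of_pos z hapos
    have h0 := Int.emod_nonneg z (ne_of_gt hapos)
    omega
  have hmodself : ∀ z : ℤ, z ≡ (((z % (c.support.card : ℤ)).toNat : ℕ) : ℤ)
      [ZMOD (c.support.card : ℤ)] := by
    intro z
    rw [hres z]
    exact (Int.emod_emod_of_dvd z dvd_rfl).symm
  by_cases h1 : ∃ x : ℤ, ∀ i : Fin n, |((β i : ℕ) : ℤ) - (((α ^ x) i : ℕ) : ℤ)| ≤ 1
  · obtain ⟨x₁, hx₁⟩ := h1
    by_cases h2 : ∃ x : ℤ, (∀ i : Fin n, |((β i : ℕ) : ℤ) - (((α ^ x) i : ℕ) : ℤ)| ≤ 1) ∧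
        ¬ x ≡ x₁ [ZMOD (c.support.card : ℤ)]
    · obtain ⟨x₂, hx₂, hne12⟩ := h2
      refine ⟨(x₁ % (c.support.card : ℤ)).toNat, (x₂ % (c.support.card : ℤ)).toNat,
        hreslt x₁, hreslt x₂, ?_⟩
      intro x hx
      by_contra hcon
      push_neg at hcon
      obtain ⟨hc1, hc2⟩ := hcon
      have hn1 : ¬ x ≡ x₁ [ZMOD (c.support.card : ℤ)] :=
        fun h => hc1 (h.trans (hmodself x₁))
      have hn2 : ¬ x ≡ x₂ [ZMOD (c.support.card : ℤ)] :=
        fun h => hc2 (h.trans (hmodself x₂))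
      exact key3 x x₁ x₂ hx hx₁ hx₂ hn1 hn2 (fun h => hne12 (h.symm.trans (Int.ModEq.refl x₁)) ) |>.elim
    · push_neg at h2
      refine ⟨(x₁ % (c.support.card : ℤ)).toNat, (x₁ % (c.support.card : ℤ)).toNat,
        hreslt x₁, hreslt x₁, ?_⟩
      intro x hx
      left
      exact (h2 x hx).trans (hmodself x₁)
  · push_neg at h1
    refine ⟨0, 0, by omega, by omega, ?_⟩
    intro x hx
    exact absurd hx (by simpa using (h1 x))
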